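/- Let n ≥ 3, and let Ω ⊆ ℝⁿ be a nonempty open set. Suppose 1 < q₀ ≤ q₁ < ∞ and 0 ≤ λ₁ ≤ λ₀ < n satisfy (n − λ₀)/q₀ = (n − λ₁)/q₁, and let q₀′, q₁′ denote the conjugate exponents. Then the block space H_{q₀′,λ₀}(Ω) embeds continuously into H_{q₁′,λ₁}(Ω). Moreover, setting α := (n − λ)/q for 1 < q < ∞ and 0 ≤ λ < n, the block space H_{q′,λ}(Ω) embeds continuously into L^{n/(n−α)}(Ω). -/

import Mathlib

open MeasureTheory Metric Set Filter
open scoped ENNReal Topology RealInnerProductSpace NNReal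

noncomputable section

/-- Euclidean space `ℝⁿ`. -/
abbrev Euc (n : ℕ) : Type := EuclideanSpace ℝ (Fin n)

variable {n : ℕ} {F : Type*} [NormedAddCommGroup F] [NormedSpace ℝ F]

/-- The Morrey norm `‖f‖_{M_{q,λ}(Ω)} = sup_{x ∈ Ω, R > 0} R^{-λ/q} ‖f‖_{L^q(Ω ∩ B(x,R))}`. -/
def morreyNorm (q lam : ℝ) (Ω : Set (Euc n)) (f : Euc n → F) : ℝ≥0∞ :=
  ⨆ (x : Euc n) (_ : x ∈ Ω) (R : ℝ) (_ : 0 < R),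
    ENNReal.ofReal (R ^ (-(lam / q))) *
      eLpNorm f (ENNReal.ofReal q) (volume.restrict (Ω ∩ ball x R))

/-- `f ∈ L^q_loc(Ω̄)`. -/
def LocLqOn (q : ℝ) (Ω : Set (Euc n)) (f : Euc n → F) : Prop :=
  ∀ K : Set (Euc n), IsCompact K → MemLp f (ENNReal.ofReal q) (volume.restrict (Ω ∩ K))

/-- Membership in the Morrey space `M_{q,λ}(Ω)`. -/
def MemMorrey (q lam : ℝ) (Ω : Set (Euc n)) (f : Euc n → F) : Prop :=
  LocLqOn q Ω f ∧ morreyNorm q lam Ω f ≠ ⊤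

/-- `C_0^∞(Ω̄)`: smooth with compact support contained in `Ω̄`. -/
def IsTestOnClosure (Ω : Set (Euc n)) (g : Euc n → F) : Prop :=
  ContDiff ℝ (⊤ : ℕ∞) g ∧ HasCompactSupport g ∧ tsupport g ⊆ closure Ω

/-- `C_0^∞(Ω)`: smooth, compact support contained in `Ω`. -/
def IsTestIn (Ω : Set (Euc n)) (g : Euc n → F) : Prop :=
  ContDiff ℝ (⊤ : ℕ∞) g ∧ HasCompactSupport g ∧ tsupport g ⊆ Ω

/-- Membership in the Zorko space `M̊_{q,λ}(Ω)`: the closure of `C_0^∞(Ω̄)` in `M_{q,λ}(Ω)`. -/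
def MemZorko (q lam : ℝ) (Ω : Set (Euc n)) (f : Euc n → F) : Prop :=
  MemMorrey q lam Ω f ∧
    ∀ ε : ℝ, 0 < ε → ∃ g : Euc n → F, IsTestOnClosure Ω g ∧
      morreyNorm q lam Ω (f - g) < ENNReal.ofReal ε

/-- A `(p,λ)`-block on Ω (supported in some `Ω ∩ B(x,R)` with
`R^{λ/p'} ‖ρ‖_{L^p(Ω ∩ B(x,R))} ≤ 1`, where `p'` is the conjugate exponent of `p`). -/
def IsBlock (p lam : ℝ) (Ω : Set (Euc n)) (ρ : Euc n → F) : Prop :=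
  ∃ R : ℝ, 0 < R ∧ ∃ x ∈ Ω,
    Function.support ρ ⊆ closure (Ω ∩ ball x R) ∧
    MemLp ρ (ENNReal.ofReal p) (volume.restrict (Ω ∩ ball x R)) ∧
    ENNReal.ofReal (R ^ (lam * (p - 1) / p)) *
      eLpNorm ρ (ENNReal.ofReal p) (volume.restrict (Ω ∩ ball x R)) ≤ 1

/-- A block representation `f = Σ c_k φ_k` with `(p,λ)`-blocks `φ_k` and `{c_k} ∈ ℓ¹`. -/
def BlockRep (p lam : ℝ) (Ω : Set (Euc n)) (f : Euc n → F)
    (c : ℕ → ℝ) (φ : ℕ → Euc n → F) : Prop :=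
  (∀ k, IsBlock p lam Ω (φ k)) ∧ Summable (fun k => |c k|) ∧
    ∀ᵐ x ∂(volume.restrict Ω), HasSum (fun k => c k • φ k x) (f x)

/-- Membership in the block space `H_{p,λ}(Ω)`. -/
def MemBlock (p lam : ℝ) (Ω : Set (Euc n)) (f : Euc n → F) : Prop :=
  ∃ c φ, BlockRep p lam Ω f c φ

/-- The block space norm: infimum of `Σ |c_k|` over block representations. -/
def blockNorm (p lam : ℝ) (Ω : Set (Euc n)) (f : Euc n → F) : ℝ≥0∞ :=
  ⨅ (c : ℕ → ℝ) (φ : ℕ → Euc n → F) (_ : BlockRep p lam Ω f c φ),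
    ENNReal.ofReal (∑' k, |c k|)

/-- `g` is the weak `i`-th partial derivative of `f` on `Ω`. -/
def HasWeakPartialDeriv (Ω : Set (Euc n)) (f g : Euc n → ℝ) (i : Fin n) : Prop :=
  ∀ φ : Euc n → ℝ, IsTestIn Ω φ →
    ∫ x in Ω, f x * fderiv ℝ φ x (EuclideanSpace.single i 1) = - ∫ x in Ω, g x * φ x

/-- `v` is the weak gradient of `p` on `Ω`. -/
def HasWeakGradient (Ω : Set (Euc n)) (p : Euc n → ℝ) (v : Euc n → Euc n) : Prop :=
  ∀ i : Fin n, HasWeakPartialDeriv Ω p (fun x => v x i) i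

/-- Locally integrable on `Ω̄` (i.e. integrable on `Ω ∩ K` for every compact `K`). -/
def LocIntOn (Ω : Set (Euc n)) (f : Euc n → F) : Prop :=
  ∀ K : Set (Euc n), IsCompact K → IntegrableOn f (Ω ∩ K) volume

/-- `v = ∇p` for some `p ∈ W^{1,1}_loc(Ω̄)`. -/
def IsGradField (Ω : Set (Euc n)) (v : Euc n → Euc n) : Prop :=
  ∃ p : Euc n → ℝ, LocIntOn Ω p ∧ LocIntOn Ω v ∧ HasWeakGradient Ω p v

/-- A divergence-free test vector field in `C^∞_{0,σ}(Ω)`. -/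
def IsSolenoidalTest (Ω : Set (Euc n)) (w : Euc n → Euc n) : Prop :=
  ContDiff ℝ (⊤ : ℕ∞) w ∧ HasCompactSupport w ∧ tsupport w ⊆ Ω ∧
    ∀ x : Euc n, (∑ i : Fin n, fderiv ℝ (fun y => w y i) x (EuclideanSpace.single i 1)) = 0

/-- Membership in `S M̊_{q,λ}(Ω)`: closure of `C^∞_{0,σ}(Ω)` in the Morrey norm. -/
def MemSZorko (q lam : ℝ) (Ω : Set (Euc n)) (u : Euc n → Euc n) : Prop :=
  MemZorko q lam Ω u ∧
    ∀ ε : ℝ, 0 < ε → ∃ w : Euc n → Euc n, IsSolenoidalTest Ω w ∧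
      morreyNorm q lam Ω (u - w) < ENNReal.ofReal ε

/-- Classical `i`-th partial derivative. -/
def pderiv' (i : Fin n) (f : Euc n → ℝ) : Euc n → ℝ :=
  fun x => fderiv ℝ f x (EuclideanSpace.single i 1)

/-- Iterated classical partial derivative along a list of directions. -/
def pderivList : List (Fin n) → (Euc n → ℝ) → (Euc n → ℝ)
  | [] => fun f => f
  | i :: l => fun f => pderivList l (pderiv' i f)

/-- Iterated weak derivative along a list of directions. -/
def HasWeakDerivAlong (Ω : Set (Euc n)) : List (Fin n) → (Euc n → ℝ) → (Euc n → ℝ) → Prop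
  | [] => fun f g => ∀ᵐ x ∂(volume.restrict Ω), g x = f x
  | i :: l => fun f g => ∃ h, HasWeakPartialDeriv Ω f h i ∧ HasWeakDerivAlong Ω l h g

/-- Membership in the Sobolev–Morrey space `W^m M_{q,λ}(Ω)`. -/
def MemSobolevMorrey (m : ℕ) (q lam : ℝ) (Ω : Set (Euc n)) (f : Euc n → ℝ) : Prop :=
  MemMorrey q lam Ω f ∧ ∀ l : List (Fin n), l.length ≤ m →
    ∃ g, HasWeakDerivAlong Ω l f g ∧ MemMorrey q lam Ω g

/-- Membership in the Sobolev–Zorko space `W^m M̊_{q,λ}(Ω)`. -/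
def MemSobolevZorko (m : ℕ) (q lam : ℝ) (Ω : Set (Euc n)) (f : Euc n → ℝ) : Prop :=
  MemZorko q lam Ω f ∧ ∀ l : List (Fin n), l.length ≤ m →
    ∃ g, HasWeakDerivAlong Ω l f g ∧ MemZorko q lam Ω g

/-- Membership in the Sobolev–block space `W^m H_{p,λ}(Ω)`. -/
def MemSobolevBlock (m : ℕ) (p lam : ℝ) (Ω : Set (Euc n)) (f : Euc n → ℝ) : Prop :=
  MemBlock p lam Ω f ∧ ∀ l : List (Fin n), l.length ≤ m →
    ∃ g, HasWeakDerivAlong Ω l f g ∧ MemBlock p lam Ω g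

/-- `f ∈ W^1 M̊_{q,λ}(Ω)` with weak gradient `v`. -/
def MemW1Zorko (q lam : ℝ) (Ω : Set (Euc n)) (f : Euc n → ℝ) (v : Euc n → Euc n) : Prop :=
  MemZorko q lam Ω f ∧ HasWeakGradient Ω f v ∧
    ∀ i : Fin n, MemZorko q lam Ω (fun x => v x i)

/-- `f ∈ W^1_0 M̊_{q,λ}(Ω)` with weak gradient `v`: member of the closure of `C_0^∞(Ω)`
in the `W^1 M_{q,λ}(Ω)` norm. -/
def MemW10Zorko (q lam : ℝ) (Ω : Set (Euc n)) (f : Euc n → ℝ) (v : Euc n → Euc n) : Prop :=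
  MemMorrey q lam Ω f ∧ HasWeakGradient Ω f v ∧
    (∀ i : Fin n, MemMorrey q lam Ω (fun x => v x i)) ∧
    ∀ ε : ℝ, 0 < ε → ∃ g : Euc n → ℝ, IsTestIn Ω g ∧
      morreyNorm q lam Ω (f - g) < ENNReal.ofReal ε ∧
      ∀ i : Fin n,
        morreyNorm q lam Ω (fun x => v x i - fderiv ℝ g x (EuclideanSpace.single i 1))
          < ENNReal.ofReal ε

/-- `f ∈ W^1 H_{p,λ}(Ω)` with weak gradient `v`. -/
def MemW1Block (p lam : ℝ) (Ω : Set (Euc n)) (f : Euc n → ℝ) (v : Euc n → Euc n) : Prop :=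
  MemBlock p lam Ω f ∧ HasWeakGradient Ω f v ∧
    ∀ i : Fin n, MemBlock p lam Ω (fun x => v x i)

/-- Near `x`, `Ω` is the open region above the graph of a `C¹` function over a hyperplane. -/
def IsC1GraphAt (Ω : Set (Euc n)) (x : Euc n) : Prop :=
  ∃ r : ℝ, 0 < r ∧ ∃ v : Euc n, ‖v‖ = 1 ∧ ∃ ψ : Euc n → ℝ, ContDiff ℝ 1 ψ ∧
    Ω ∩ ball x r = {y ∈ ball x r | ψ (y - ⟪y, v⟫ • v) < ⟪y, v⟫}

/-- A (nonempty, open) domain with `C¹` boundary. -/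
def IsC1Domain (Ω : Set (Euc n)) : Prop :=
  IsOpen Ω ∧ Ω.Nonempty ∧ ∀ x ∈ frontier Ω, IsC1GraphAt Ω x

/-- Near `x`, `Ω` is the open region above the graph of a Lipschitz function. -/
def IsLipGraphAt (Ω : Set (Euc n)) (x : Euc n) : Prop :=
  ∃ r : ℝ, 0 < r ∧ ∃ v : Euc n, ‖v‖ = 1 ∧ ∃ ψ : Euc n → ℝ, (∃ K : ℝ≥0, LipschitzWith K ψ) ∧
    Ω ∩ ball x r = {y ∈ ball x r | ψ (y - ⟪y, v⟫ • v) < ⟪y, v⟫}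

/-- A (nonempty, open) domain with Lipschitz boundary. -/
def IsLipschitzDomain (Ω : Set (Euc n)) : Prop :=
  IsOpen Ω ∧ Ω.Nonempty ∧ ∀ x ∈ frontier Ω, IsLipGraphAt Ω x

/-- A special Lipschitz domain: up to a rigid motion, the region above the graph of a
Lipschitz function `ψ` defined on a hyperplane. -/
def IsSpecialLipschitzDomain (Ω : Set (Euc n)) : Prop :=
  ∃ v : Euc n, ‖v‖ = 1 ∧ ∃ ψ : Euc n → ℝ, (∃ K : ℝ≥0, LipschitzWith K ψ) ∧
    Ω = {y : Euc n | ψ (y - ⟪y, v⟫ • v) < ⟪y, v⟫}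

/-- `g ∈ C^∞(Ω̄)`: smooth on an open neighborhood of `Ω̄`. -/
def SmoothOnClosure (Ω : Set (Euc n)) (g : Euc n → ℝ) : Prop :=
  ∃ U : Set (Euc n), IsOpen U ∧ closure Ω ⊆ U ∧ ContDiffOn ℝ (⊤ : ℕ∞) g U

/-- A function in `C^∞(Ω̄)` which is bounded together with all its partial derivatives. -/
def IsNiceOn (Ω : Set (Euc n)) (g : Euc n → ℝ) : Prop :=
  SmoothOnClosure Ω g ∧
    ∀ l : List (Fin n), ∃ C : ℝ, ∀ x ∈ closure Ω, |pderivList l g x| ≤ C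

/-- Membership in `𝔐^k_{q,λ}(Ω)`: the closure in `W^k M_{q,λ}(Ω)` of the set of functions
in `C^∞(Ω̄) ∩ W^k M_{q,λ}(Ω)` which are bounded together with all their derivatives. -/
def MemMk (k : ℕ) (q lam : ℝ) (Ω : Set (Euc n)) (f : Euc n → ℝ) : Prop :=
  MemSobolevMorrey k q lam Ω f ∧
    ∀ ε : ℝ, 0 < ε → ∃ g : Euc n → ℝ, IsNiceOn Ω g ∧
      MemSobolevMorrey k q lam Ω g ∧
      ∀ l : List (Fin n), l.length ≤ k → ∀ df, HasWeakDerivAlong Ω l f df →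
        morreyNorm q lam Ω (df - pderivList l g) < ENNReal.ofReal ε

lemma euc_nontrivial {n : ℕ} (hn : 0 < n) : Nontrivial (Euc n) := by
  have := Fin.pos_iff_nonempty.mp hn
  infer_instance

lemma core_bound {n : ℕ} (hn : 0 < n) (Ω : Set (Euc n)) {s' p' t a₀ R : ℝ} {x : Euc n}
    (hs0 : 0 < s') (hsp : s' ≤ p') (hR : 0 < R)
    (ht : t + n * (1 / s' - 1 / p') = a₀)
    {ρ : Euc n → ℝ}
    (hmeas : AEStronglyMeasurable ρ (volume.restrict (Ω ∩ ball x R)))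
    (hbd : ENNReal.ofReal (R ^ a₀) *
        eLpNorm ρ (ENNReal.ofReal p') (volume.restrict (Ω ∩ ball x R)) ≤ 1) :
    ENNReal.ofReal (R ^ t) * eLpNorm ρ (ENNReal.ofReal s') (volume.restrict (Ω ∩ ball x R))
      ≤ volume (ball (0 : Euc n) 1) ^ (1 / s' - 1 / p') := by
  haveI := euc_nontrivial hn
  set K := volume (ball (0 : Euc n) 1) with hK
  set θ := 1 / s' - 1 / p' with hθdef
  have hp0 : 0 < p' := hs0.trans_le hsp
  have hθ : 0 ≤ θ := sub_nonneg.2 (one_div_le_one_div_of_le hs0 hsp)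
  have h1 : eLpNorm ρ (ENNReal.ofReal s') (volume.restrict (Ω ∩ ball x R))
      ≤ eLpNorm ρ (ENNReal.ofReal p') (volume.restrict (Ω ∩ ball x R))
        * volume (Ω ∩ ball x R) ^ θ := by
    have h := eLpNorm_le_eLpNorm_mul_rpow_measure_univ
      (ENNReal.ofReal_le_ofReal hsp) hmeas
    rwa [Measure.restrict_apply_univ, ENNReal.toReal_ofReal hs0.le,
      ENNReal.toReal_ofReal hp0.le] at h
  have hballs : volume (Ω ∩ ball x R) ≤ ENNReal.ofReal (R ^ (n : ℕ)) * K := by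
    calc volume (Ω ∩ ball x R) ≤ volume (ball x R) := measure_mono inter_subset_right
    _ = _ := by rw [Measure.addHaar_ball volume x hR.le, finrank_euclideanSpace_fin]
  have h3 : volume (Ω ∩ ball x R) ^ θ
      ≤ ENNReal.ofReal (R ^ ((n : ℝ) * θ)) * K ^ θ := by
    calc volume (Ω ∩ ball x R) ^ θ ≤ (ENNReal.ofReal (R ^ (n : ℕ)) * K) ^ θ :=
          ENNReal.rpow_le_rpow hballs hθ
    _ = ENNReal.ofReal (R ^ (n : ℕ)) ^ θ * K ^ θ := ENNReal.mul_rpow_of_nonneg _ _ hθ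
    _ = ENNReal.ofReal (R ^ ((n : ℝ) * θ)) * K ^ θ := by
        rw [ENNReal.ofReal_rpow_of_pos (pow_pos hR n), ← Real.rpow_natCast R n,
          ← Real.rpow_mul hR.le]
  calc ENNReal.ofReal (R ^ t) * eLpNorm ρ (ENNReal.ofReal s') (volume.restrict (Ω ∩ ball x R))
      ≤ ENNReal.ofReal (R ^ t) *
        (eLpNorm ρ (ENNReal.ofReal p') (volume.restrict (Ω ∩ ball x R))
          * volume (Ω ∩ ball x R) ^ θ) := mul_le_mul_right h1 _
    _ ≤ ENNReal.ofReal (R ^ t) *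
        (eLpNorm ρ (ENNReal.ofReal p') (volume.restrict (Ω ∩ ball x R))
          * (ENNReal.ofReal (R ^ ((n : ℝ) * θ)) * K ^ θ)) :=
          mul_le_mul_right (mul_le_mul_right h3 _) _
    _ = (ENNReal.ofReal (R ^ t) * ENNReal.ofReal (R ^ ((n : ℝ) * θ))
          * eLpNorm ρ (ENNReal.ofReal p') (volume.restrict (Ω ∩ ball x R))) * K ^ θ := by
        ring
    _ = (ENNReal.ofReal (R ^ a₀)
          * eLpNorm ρ (ENNReal.ofReal p') (volume.restrict (Ω ∩ ball x R))) * K ^ θ := by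
        rw [← ENNReal.ofReal_mul (Real.rpow_nonneg hR.le _), ← Real.rpow_add hR, ht]
    _ ≤ 1 * K ^ θ := mul_le_mul_left hbd _
    _ = K ^ θ := one_mul _

lemma aeeq_indicator {n : ℕ} (hn : 0 < n) {Ω : Set (Euc n)} (hΩo : IsOpen Ω)
    {x : Euc n} {R : ℝ} (hR : 0 < R) {ρ : Euc n → ℝ}
    (hsupp : Function.support ρ ⊆ closure (Ω ∩ ball x R)) :
    ρ =ᵐ[volume.restrict Ω] (Ω ∩ ball x R).indicator ρ := by
  haveI := euc_nontrivial hn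
  have hsph : ∀ᵐ y ∂(volume : Measure (Euc n)), y ∉ sphere x R :=
    measure_eq_zero_iff_ae_notMem.mp (Measure.addHaar_sphere volume x R)
  filter_upwards [ae_restrict_of_ae hsph, ae_restrict_mem hΩo.measurableSet] with y hy hyΩ
  by_cases hyb : y ∈ ball x R
  · rw [Set.indicator_of_mem (show y ∈ Ω ∩ ball x R from ⟨hyΩ, hyb⟩)]
  · rw [Set.indicator_of_notMem (fun h => hyb h.2)]
    by_contra hne
    have h1 : y ∈ closure (Ω ∩ ball x R) := hsupp hne
    have h2 : y ∈ closedBall x R := by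
      have := closure_mono (inter_subset_right (s := Ω)) h1
      rwa [closure_ball x hR.ne'] at this
    rw [mem_closedBall] at h2
    rw [mem_ball] at hyb
    exact hy (show dist y x = R from le_antisymm h2 (not_lt.mp hyb))

lemma blockNorm_le_of_rep {n : ℕ} {p lam : ℝ} {Ω : Set (Euc n)} {f : Euc n → ℝ}
    {c : ℕ → ℝ} {φ : ℕ → Euc n → ℝ} (h : BlockRep p lam Ω f c φ) :
    blockNorm p lam Ω f ≤ ENNReal.ofReal (∑' k, |c k|) := by
  unfold blockNorm
  exact iInf_le_of_le c (iInf_le_of_le φ (iInf_le _ h))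

lemma part1_main {n : ℕ} (hn0 : 0 < n) {Ω : Set (Euc n)} (hΩo : IsOpen Ω)
    {p₀ p₁ lam₀ lam₁ : ℝ}
    (hp₁pos : 0 < p₁) (hp₁p₀ : p₁ ≤ p₀)
    (hrel : lam₁ * (p₁ - 1) / p₁ + n * (1 / p₁ - 1 / p₀) = lam₀ * (p₀ - 1) / p₀) :
    ∃ c : ℝ, 0 < c ∧ ∀ f : Euc n → ℝ, MemBlock p₀ lam₀ Ω f →
      MemBlock p₁ lam₁ Ω f ∧
      blockNorm p₁ lam₁ Ω f ≤ ENNReal.ofReal c * blockNorm p₀ lam₀ Ω f := by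
  set K := volume (ball (0 : Euc n) 1) with hKdef
  set θ := 1 / p₁ - 1 / p₀ with hθdef
  have hθnn : (0:ℝ) ≤ θ := sub_nonneg.2 (one_div_le_one_div_of_le hp₁pos hp₁p₀)
  have hKθ_ne_top : K ^ θ ≠ ⊤ := ENNReal.rpow_ne_top_of_nonneg hθnn measure_ball_lt_top.ne
  set C := max 1 ((K ^ θ).toReal) with hCdef
  have hC1 : (1:ℝ) ≤ C := le_max_left _ _
  have hCpos : (0:ℝ) < C := lt_of_lt_of_le one_pos hC1
  have hKC : K ^ θ ≤ ENNReal.ofReal C := by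
    rw [← ENNReal.ofReal_toReal hKθ_ne_top]
    exact ENNReal.ofReal_le_ofReal (le_max_right _ _)
  have hconv : ∀ ρ : Euc n → ℝ, IsBlock p₀ lam₀ Ω ρ → IsBlock p₁ lam₁ Ω (C⁻¹ • ρ) := by
    rintro ρ ⟨R, hR, x, hx, hsupp, hmem, hbd⟩
    haveI : IsFiniteMeasure (volume.restrict (Ω ∩ ball x R)) := by
      constructor
      rw [Measure.restrict_apply_univ]
      exact lt_of_le_of_lt (measure_mono inter_subset_right) measure_ball_lt_top
    refine ⟨R, hR, x, hx, (Function.support_const_smul_subset _ _).trans hsupp,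
      (hmem.mono_exponent (ENNReal.ofReal_le_ofReal hp₁p₀)).const_smul _, ?_⟩
    have hcore := core_bound hn0 Ω hp₁pos hp₁p₀ hR hrel hmem.1 hbd
    rw [eLpNorm_const_smul]
    calc ENNReal.ofReal (R ^ (lam₁ * (p₁ - 1) / p₁)) * ((‖(C⁻¹:ℝ)‖₊ : ℝ≥0∞)
          * eLpNorm ρ (ENNReal.ofReal p₁) (volume.restrict (Ω ∩ ball x R)))
        = (‖(C⁻¹:ℝ)‖₊ : ℝ≥0∞) * (ENNReal.ofReal (R ^ (lam₁ * (p₁ - 1) / p₁))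
          * eLpNorm ρ (ENNReal.ofReal p₁) (volume.restrict (Ω ∩ ball x R))) := by ring
      _ ≤ (‖(C⁻¹:ℝ)‖₊ : ℝ≥0∞) * (K ^ θ) := mul_le_mul_right hcore _
      _ ≤ ENNReal.ofReal C⁻¹ * ENNReal.ofReal C := by
          rw [← enorm_eq_nnnorm, Real.enorm_eq_ofReal_abs, abs_of_pos (inv_pos.2 hCpos)]
          exact mul_le_mul_right hKC _
      _ = ENNReal.ofReal (C⁻¹ * C) := (ENNReal.ofReal_mul (inv_pos.2 hCpos).le).symm
      _ = 1 := by rw [inv_mul_cancel₀ hCpos.ne']; exact ENNReal.ofReal_one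
  refine ⟨C, hCpos, fun f hf => ?_⟩
  have hrepconv : ∀ c φ, BlockRep p₀ lam₀ Ω f c φ →
      BlockRep p₁ lam₁ Ω f (fun k => C * c k) (fun k => C⁻¹ • φ k) := by
    rintro c φ ⟨hb, hsum, hae⟩
    refine ⟨fun k => hconv _ (hb k), ?_, ?_⟩
    · simp_rw [abs_mul, abs_of_pos hCpos]
      exact hsum.mul_left C
    · filter_upwards [hae] with y hy
      have heq : (fun k => (C * c k) • (fun j => C⁻¹ • φ j) k y) = fun k => c k • φ k y := by
        funext k
        simp only [Pi.smul_apply, smul_eq_mul]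
        rw [show C * c k * (C⁻¹ * φ k y) = (C * C⁻¹) * (c k * φ k y) by ring,
          mul_inv_cancel₀ hCpos.ne', one_mul]
      rw [heq]; exact hy
  obtain ⟨c0, φ0, hrep0⟩ := hf
  refine ⟨⟨_, _, hrepconv c0 φ0 hrep0⟩, ?_⟩
  have hdiv : blockNorm p₁ lam₁ Ω f / ENNReal.ofReal C ≤ blockNorm p₀ lam₀ Ω f := by
    unfold blockNorm
    refine le_iInf fun c => le_iInf fun φ => le_iInf fun hrep => ?_
    rw [ENNReal.div_le_iff_le_mul (Or.inl (ENNReal.ofReal_pos.2 hCpos).ne')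
      (Or.inl ENNReal.ofReal_ne_top)]
    calc blockNorm p₁ lam₁ Ω f ≤ ENNReal.ofReal (∑' k, |C * c k|) :=
          blockNorm_le_of_rep (hrepconv c φ hrep)
      _ = ENNReal.ofReal (C * ∑' k, |c k|) := by
          have h : ∑' k, |C * c k| = C * ∑' k, |c k| := by
            simp_rw [abs_mul, abs_of_pos hCpos]; exact tsum_mul_left
          rw [h]
      _ = ENNReal.ofReal (∑' k, |c k|) * ENNReal.ofReal C := by
          rw [ENNReal.ofReal_mul hCpos.le, mul_comm]
  have h2 := (ENNReal.div_le_iff_le_mul (Or.inl (ENNReal.ofReal_pos.2 hCpos).ne')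
    (Or.inl ENNReal.ofReal_ne_top)).mp hdiv
  rwa [mul_comm] at h2

lemma part2_main {n : ℕ} (hn0 : 0 < n) {Ω : Set (Euc n)} (hΩo : IsOpen Ω)
    {p s lam : ℝ} (hs0 : 0 < s) (hs1 : 1 ≤ s) (hsp : s ≤ p)
    (hrel : (0:ℝ) + n * (1 / s - 1 / p) = lam * (p - 1) / p) :
    ∃ c : ℝ, 0 < c ∧ ∀ f : Euc n → ℝ, MemBlock p lam Ω f →
      MemLp f (ENNReal.ofReal s) (volume.restrict Ω) ∧
      eLpNorm f (ENNReal.ofReal s) (volume.restrict Ω)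
        ≤ ENNReal.ofReal c * blockNorm p lam Ω f := by
  set K := volume (ball (0 : Euc n) 1) with hKdef
  set θ := 1 / s - 1 / p with hθdef
  have hθnn : (0:ℝ) ≤ θ := sub_nonneg.2 (one_div_le_one_div_of_le hs0 hsp)
  have hKθ_ne_top : K ^ θ ≠ ⊤ := ENNReal.rpow_ne_top_of_nonneg hθnn measure_ball_lt_top.ne
  set C := max 1 ((K ^ θ).toReal) with hCdef
  have hC1 : (1:ℝ) ≤ C := le_max_left _ _
  have hCpos : (0:ℝ) < C := lt_of_lt_of_le one_pos hC1
  have hKC : K ^ θ ≤ ENNReal.ofReal C := by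
    rw [← ENNReal.ofReal_toReal hKθ_ne_top]
    exact ENNReal.ofReal_le_ofReal (le_max_right _ _)
  have hsE1 : (1 : ℝ≥0∞) ≤ ENNReal.ofReal s := by
    rw [← ENNReal.ofReal_one]; exact ENNReal.ofReal_le_ofReal hs1
  have key : ∀ (f : Euc n → ℝ) c φ, BlockRep p lam Ω f c φ →
      MemLp f (ENNReal.ofReal s) (volume.restrict Ω) ∧
      eLpNorm f (ENNReal.ofReal s) (volume.restrict Ω)
        ≤ ENNReal.ofReal C * ENNReal.ofReal (∑' k, |c k|) := by
    rintro f c φ ⟨hb, hsum, hae⟩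
    choose R hR x hx hsupp hmem hbd using hb
    set ψ : ℕ → Euc n → ℝ := fun k => (Ω ∩ ball (x k) (R k)).indicator (φ k) with hψ
    have hmeasb : ∀ k, MeasurableSet (Ω ∩ ball (x k) (R k)) := fun k =>
      (hΩo.inter isOpen_ball).measurableSet
    have hmeasΩ : ∀ k, AEStronglyMeasurable (ψ k) (volume.restrict Ω) := fun k =>
      ((aestronglyMeasurable_indicator_iff (hmeasb k)).mpr (hmem k).1).mono_measure
        Measure.restrict_le_self
    have haeeq : ∀ k, φ k =ᵐ[volume.restrict Ω] ψ k := fun k =>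
      aeeq_indicator hn0 hΩo (hR k) (hsupp k)
    have hblk : ∀ k, eLpNorm (ψ k) (ENNReal.ofReal s) (volume.restrict Ω)
        ≤ ENNReal.ofReal C := by
      intro k
      calc eLpNorm (ψ k) (ENNReal.ofReal s) (volume.restrict Ω)
          ≤ eLpNorm (ψ k) (ENNReal.ofReal s) volume :=
            eLpNorm_mono_measure _ Measure.restrict_le_self
        _ = eLpNorm (φ k) (ENNReal.ofReal s) (volume.restrict (Ω ∩ ball (x k) (R k))) :=
            eLpNorm_indicator_eq_eLpNorm_restrict (hmeasb k)
        _ ≤ K ^ θ := by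
            have h := core_bound hn0 Ω hs0 hsp (hR k) hrel (hmem k).1 (hbd k)
            rwa [Real.rpow_zero, ENNReal.ofReal_one, one_mul] at h
        _ ≤ ENNReal.ofReal C := hKC
    set S : ℕ → Euc n → ℝ := fun N => ∑ k ∈ Finset.range N, c k • ψ k with hS
    have hSeq : ∀ N y, S N y = ∑ k ∈ Finset.range N, c k • ψ k y := by
      intro N y; simp [hS]
    have hSmeas : ∀ N, AEStronglyMeasurable (S N) (volume.restrict Ω) := by
      intro N
      have h := Finset.aestronglyMeasurable_sum (Finset.range N)
        (fun k _ => ((hmeasΩ k).const_smul (c k)))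
      have heq : S N = fun a => ∑ k ∈ Finset.range N, (c k • ψ k) a := by
        funext a; simp [hS]
      exact h
    have htend : ∀ᵐ y ∂(volume.restrict Ω), Tendsto (fun N => S N y) atTop (𝓝 (f y)) := by
      filter_upwards [ae_all_iff.mpr haeeq, hae] with y h1 h2
      have h2' : HasSum (fun k => c k • ψ k y) (f y) := by
        have heq : (fun k => c k • ψ k y) = fun k => c k • φ k y := funext fun k => by
          rw [← h1 k]
        rw [heq]; exact h2
      have h3 := h2'.tendsto_sum_nat
      have heq2 : (fun N => S N y) = fun N => ∑ k ∈ Finset.range N, c k • ψ k y := by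
        funext N; exact hSeq N y
      rw [heq2]; exact h3
    have hfmeas : AEStronglyMeasurable f (volume.restrict Ω) :=
      aestronglyMeasurable_of_tendsto_ae atTop hSmeas htend
    have hSbound : ∀ N, eLpNorm (S N) (ENNReal.ofReal s) (volume.restrict Ω)
        ≤ ENNReal.ofReal C * ENNReal.ofReal (∑' k, |c k|) := by
      intro N
      calc eLpNorm (S N) (ENNReal.ofReal s) (volume.restrict Ω)
          ≤ ∑ k ∈ Finset.range N, eLpNorm (c k • ψ k) (ENNReal.ofReal s) (volume.restrict Ω) :=
            eLpNorm_sum_le (fun k _ => (hmeasΩ k).const_smul (c k)) hsE1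
        _ ≤ ∑ k ∈ Finset.range N, ENNReal.ofReal |c k| * ENNReal.ofReal C := by
            refine Finset.sum_le_sum fun k _ => ?_
            rw [eLpNorm_const_smul, Real.enorm_eq_ofReal_abs]
            exact mul_le_mul_right (hblk k) _
        _ ≤ ∑' k, ENNReal.ofReal |c k| * ENNReal.ofReal C := ENNReal.sum_le_tsum _
        _ = (∑' k, ENNReal.ofReal |c k|) * ENNReal.ofReal C := ENNReal.tsum_mul_right
        _ = ENNReal.ofReal (∑' k, |c k|) * ENNReal.ofReal C := by
            rw [ENNReal.ofReal_tsum_of_nonneg (fun k => abs_nonneg _) hsum]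
        _ = ENNReal.ofReal C * ENNReal.ofReal (∑' k, |c k|) := mul_comm _ _
    have hfnorm : eLpNorm f (ENNReal.ofReal s) (volume.restrict Ω)
        ≤ ENNReal.ofReal C * ENNReal.ofReal (∑' k, |c k|) := by
      refine (MeasureTheory.Lp.eLpNorm_lim_le_liminf_eLpNorm hSmeas f htend).trans ?_
      exact le_trans Filter.liminf_le_limsup
        (limsup_le_of_le (u := fun N => eLpNorm (S N) (ENNReal.ofReal s) (volume.restrict Ω))
          (by isBoundedDefault) (Eventually.of_forall hSbound))
    refine ⟨⟨hfmeas, lt_of_le_of_lt hfnorm ?_⟩, hfnorm⟩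
    exact ENNReal.mul_lt_top ENNReal.ofReal_lt_top ENNReal.ofReal_lt_top
  refine ⟨C, hCpos, fun f hf => ?_⟩
  obtain ⟨c0, φ0, hrep0⟩ := hf
  refine ⟨(key f c0 φ0 hrep0).1, ?_⟩
  have hdiv : eLpNorm f (ENNReal.ofReal s) (volume.restrict Ω) / ENNReal.ofReal C
      ≤ blockNorm p lam Ω f := by
    unfold blockNorm
    refine le_iInf fun c => le_iInf fun φ => le_iInf fun hrep => ?_
    rw [ENNReal.div_le_iff_le_mul (Or.inl (ENNReal.ofReal_pos.2 hCpos).ne')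
      (Or.inl ENNReal.ofReal_ne_top)]
    exact ((key f c φ hrep).2).trans_eq (mul_comm _ _)
  have h2 := (ENNReal.div_le_iff_le_mul (Or.inl (ENNReal.ofReal_pos.2 hCpos).ne')
    (Or.inl ENNReal.ofReal_ne_top)).mp hdiv
  rwa [mul_comm] at h2


/-- **Embeddings of block spaces.** If `(n − λ₀)/q₀ = (n − λ₁)/q₁` with
`1 < q₀ ≤ q₁ < ∞`, `0 ≤ λ₁ ≤ λ₀ < n`, then `H_{q₀′,λ₀}(Ω) ↪ H_{q₁′,λ₁}(Ω)` continuously.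
Moreover, with `α := (n − λ)/q`, `H_{q′,λ}(Ω) ↪ L^{n/(n−α)}(Ω)` continuously. -/
theorem block_space_embeddings
    {n : ℕ} (hn : 3 ≤ n) (Ω : Set (Euc n)) (hΩo : IsOpen Ω) (hΩne : Ω.Nonempty)
    (q₀ q₁ lam₀ lam₁ : ℝ) (hq₀ : 1 < q₀) (hq₀₁ : q₀ ≤ q₁)
    (hlam₁0 : 0 ≤ lam₁) (hlam₁₀ : lam₁ ≤ lam₀) (hlam₀n : lam₀ < n)
    (hscale : (n - lam₀) / q₀ = (n - lam₁) / q₁)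
    (q lam : ℝ) (hq : 1 < q) (hlam0 : 0 ≤ lam) (hlamn : lam < n) :
    (∃ c : ℝ, 0 < c ∧ ∀ f : Euc n → ℝ,
      MemBlock (q₀ / (q₀ - 1)) lam₀ Ω f →
        MemBlock (q₁ / (q₁ - 1)) lam₁ Ω f ∧
        blockNorm (q₁ / (q₁ - 1)) lam₁ Ω f
          ≤ ENNReal.ofReal c * blockNorm (q₀ / (q₀ - 1)) lam₀ Ω f) ∧
    (∃ c : ℝ, 0 < c ∧ ∀ f : Euc n → ℝ,
      MemBlock (q / (q - 1)) lam Ω f →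
        MemLp f (ENNReal.ofReal ((n : ℝ) / ((n : ℝ) - (n - lam) / q))) (volume.restrict Ω) ∧
        eLpNorm f (ENNReal.ofReal ((n : ℝ) / ((n : ℝ) - (n - lam) / q))) (volume.restrict Ω)
          ≤ ENNReal.ofReal c * blockNorm (q / (q - 1)) lam Ω f) := by
  have hn0 : 0 < n := by omega
  have hnR : (0:ℝ) < n := by exact_mod_cast hn0
  constructor
  · -- Part 1
    have hq₁ : 1 < q₁ := hq₀.trans_le hq₀₁
    have hp₁pos : 0 < q₁ / (q₁ - 1) := div_pos (by linarith) (by linarith)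
    have hp₁p₀ : q₁ / (q₁ - 1) ≤ q₀ / (q₀ - 1) := by
      rw [div_le_div_iff₀ (by linarith) (by linarith)]
      nlinarith
    have hscale' : ((n:ℝ) - lam₀) * q₁ = ((n:ℝ) - lam₁) * q₀ := by
      rw [div_eq_div_iff (by linarith) (by linarith)] at hscale
      linarith
    have hrel : lam₁ * (q₁ / (q₁ - 1) - 1) / (q₁ / (q₁ - 1))
        + n * (1 / (q₁ / (q₁ - 1)) - 1 / (q₀ / (q₀ - 1)))
        = lam₀ * (q₀ / (q₀ - 1) - 1) / (q₀ / (q₀ - 1)) := by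
      have h0 : q₀ ≠ 0 := by linarith
      have h1 : q₁ ≠ 0 := by linarith
      have h2 : q₀ - 1 ≠ 0 := by linarith
      have h3 : q₁ - 1 ≠ 0 := by linarith
      field_simp
      linear_combination hscale'
    exact part1_main hn0 hΩo hp₁pos hp₁p₀ hrel
  · -- Part 2
    have h0 : q ≠ 0 := by linarith
    have h2 : q - 1 ≠ 0 := by linarith
    have hα : 0 < ((n:ℝ) - lam) / q := div_pos (by linarith) (by linarith)
    have hden : (0:ℝ) < (n:ℝ) - ((n:ℝ) - lam) / q := by
      have : ((n:ℝ) - lam) / q < n := by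
        rw [div_lt_iff₀ (by linarith)]
        nlinarith
      linarith
    have hs0 : (0:ℝ) < (n:ℝ) / ((n:ℝ) - ((n:ℝ) - lam) / q) := div_pos hnR hden
    have hs1 : (1:ℝ) ≤ (n:ℝ) / ((n:ℝ) - ((n:ℝ) - lam) / q) := by
      rw [le_div_iff₀ hden]; linarith
    have hsp : (n:ℝ) / ((n:ℝ) - ((n:ℝ) - lam) / q) ≤ q / (q - 1) := by
      rw [div_le_div_iff₀ hden (by linarith)]
      have hq' : ((n:ℝ) - lam) / q * q = (n:ℝ) - lam := div_mul_cancel₀ _ (by linarith)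
      nlinarith [hα]
    have hrel : (0:ℝ) + n * (1 / ((n:ℝ) / ((n:ℝ) - ((n:ℝ) - lam) / q)) - 1 / (q / (q - 1)))
        = lam * (q / (q - 1) - 1) / (q / (q - 1)) := by
      field_simp
      ring
    exact part2_main hn0 hΩo hs0 hs1 hsp hrel
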